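/- arXiv:1608.05872 — 3 statements merged into one kernel-verified Lean document; each statement's English description precedes it below -/
import Mathlib

section
/- Let B ⊂ 𝔻 be a horoball (a Euclidean disk internally tangent to the unit circle) with 0 ∈ ∂B. Then the integral ∫_B (1/π) log(1/|z|) · (2/(1-|z|²))² dA(z) is finite. Consequently, the expected total time hyperbolic Brownian motion started at a boundary point of a horoball spends inside that horoball is a finite constant independent of the horoball (by conformal invariance). -/
open MeasureTheory Complex Set

noncomputable section

/-- Density of the Poincaré metric on the unit disk. -/
def rho (z : ℂ) : ℝ := 2 / (1 - ‖z‖ ^ 2)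

/-- The Green's function of hyperbolic Brownian motion based at `0`, multiplied by the
hyperbolic area density: the integrand `g_∞(z) ρ(z)²`. -/
def greenDensity (z : ℂ) : ℝ := (1 / Real.pi) * Real.log (1 / ‖z‖) * rho z ^ 2

/-! ### Auxiliary lemmas -/

lemma measurable_greenDensity : Measurable greenDensity := by
  unfold greenDensity rho
  have h1 : Measurable fun z : ℂ => ‖z‖ := continuous_norm.measurable
  exact (measurable_const.mul (Real.measurable_log.comp (measurable_const.div h1))).mul
    ((measurable_const.div (measurable_const.sub (h1.pow_const 2))).pow_const 2)

/-- The horoball `ball (1/2) (1/2)` in real coordinates. -/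
lemma measurableSet_T : MeasurableSet {p : ℝ × ℝ | p.1 ^ 2 + p.2 ^ 2 < p.1} :=
  (isOpen_lt (by fun_prop) (by fun_prop)).measurableSet

/-- Generic slicing lemma: a function of `x` alone is integrable on the horoball region
provided `|F x| · 2√(x-x²)` is dominated by an integrable function on `(0,1)`. -/
lemma integrableOn_T_of_bound (F M : ℝ → ℝ) (hF : Measurable F)
    (hM : IntegrableOn M (Ioo (0:ℝ) 1) volume)
    (hbd : ∀ x ∈ Ioo (0:ℝ) 1, |F x| * (2 * Real.sqrt (x - x ^ 2)) ≤ M x) :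
    IntegrableOn (fun p : ℝ × ℝ => F p.1) {p : ℝ × ℝ | p.1 ^ 2 + p.2 ^ 2 < p.1} volume := by
  rw [← integrable_indicator_iff measurableSet_T]
  have hmeas : AEStronglyMeasurable
      (Set.indicator {p : ℝ × ℝ | p.1 ^ 2 + p.2 ^ 2 < p.1} (fun p : ℝ × ℝ => F p.1))
      (volume : Measure (ℝ × ℝ)) :=
    ((hF.comp measurable_fst).indicator measurableSet_T).aestronglyMeasurable
  have hslice : ∀ (x y : ℝ),
      Set.indicator {p : ℝ × ℝ | p.1 ^ 2 + p.2 ^ 2 < p.1} (fun p : ℝ × ℝ => F p.1) (x, y)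
        = Set.indicator (Ioo (-(Real.sqrt (x - x ^ 2))) (Real.sqrt (x - x ^ 2)))
            (fun _ => F x) y := by
    intro x y
    have hset : ((x, y) ∈ {p : ℝ × ℝ | p.1 ^ 2 + p.2 ^ 2 < p.1}) ↔
        y ∈ Ioo (-(Real.sqrt (x - x ^ 2))) (Real.sqrt (x - x ^ 2)) := by
      simp only [mem_setOf_eq, mem_Ioo, ← abs_lt]
      rw [show (|y| < Real.sqrt (x - x ^ 2)) ↔ (|y| ^ 2 < x - x ^ 2) from
        (Real.lt_sqrt (abs_nonneg y)), _root_.sq_abs]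
      constructor <;> intro h <;> nlinarith
    by_cases h : (x, y) ∈ {p : ℝ × ℝ | p.1 ^ 2 + p.2 ^ 2 < p.1}
    · rw [Set.indicator_of_mem h, Set.indicator_of_mem (hset.1 h)]
    · rw [Set.indicator_of_notMem h, Set.indicator_of_notMem (fun hmem => h (hset.2 hmem))]
  rw [MeasureTheory.Measure.volume_eq_prod]
  rw [MeasureTheory.integrable_prod_iff (by rwa [← MeasureTheory.Measure.volume_eq_prod])]
  constructor
  · filter_upwards with x
    rw [show (fun y => Set.indicator {p : ℝ × ℝ | p.1 ^ 2 + p.2 ^ 2 < p.1}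
        (fun p : ℝ × ℝ => F p.1) (x, y))
      = Set.indicator (Ioo (-(Real.sqrt (x - x ^ 2))) (Real.sqrt (x - x ^ 2)))
          (fun _ => F x) from funext (hslice x)]
    exact (integrable_indicator_iff measurableSet_Ioo).mpr
      (integrableOn_const measure_Ioo_lt_top.ne)
  · have hval : ∀ x : ℝ,
        (∫ y, ‖Set.indicator {p : ℝ × ℝ | p.1 ^ 2 + p.2 ^ 2 < p.1}
            (fun p : ℝ × ℝ => F p.1) (x, y)‖)
          = |F x| * (2 * Real.sqrt (x - x ^ 2)) := by
      intro x
      simp only [hslice]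
      rw [show (fun y => ‖Set.indicator (Ioo (-(Real.sqrt (x - x ^ 2))) (Real.sqrt (x - x ^ 2)))
          (fun _ => F x) y‖)
        = Set.indicator (Ioo (-(Real.sqrt (x - x ^ 2))) (Real.sqrt (x - x ^ 2)))
            (fun _ => ‖F x‖) from
          funext fun y => norm_indicator_eq_indicator_norm _ y]
      rw [MeasureTheory.integral_indicator_const _ measurableSet_Ioo]
      rw [measureReal_def, Real.volume_Ioo]
      rw [show Real.sqrt (x - x ^ 2) - -(Real.sqrt (x - x ^ 2))
          = 2 * Real.sqrt (x - x ^ 2) by ring]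
      rw [ENNReal.toReal_ofReal (by positivity)]
      rw [smul_eq_mul, Real.norm_eq_abs]
      ring
    simp_rw [hval]
    have hintM : Integrable ((Ioo (0:ℝ) 1).indicator M) volume :=
      (integrable_indicator_iff measurableSet_Ioo).mpr hM
    refine Integrable.mono' hintM ?_ ?_
    · exact (hF.abs.mul (((measurable_id.sub (measurable_id.pow_const 2)).sqrt).const_mul
        2)).aestronglyMeasurable
    · filter_upwards with x
      by_cases hx : x ∈ Ioo (0:ℝ) 1
      · rw [Set.indicator_of_mem hx]
        rw [Real.norm_eq_abs, _root_.abs_of_nonneg (by positivity)]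
        exact hbd x hx
      · rw [Set.indicator_of_notMem hx]
        have hx' : x - x ^ 2 ≤ 0 := by
          simp only [mem_Ioo, not_and_or, not_lt] at hx
          rcases hx with h | h <;> nlinarith
        rw [Real.sqrt_eq_zero'.mpr hx']
        simp

lemma integrableOn_log_T :
    IntegrableOn (fun p : ℝ × ℝ => Real.log (1 / p.1))
      {p : ℝ × ℝ | p.1 ^ 2 + p.2 ^ 2 < p.1} volume := by
  have hM : IntegrableOn (fun _ : ℝ => (4:ℝ)) (Ioo (0:ℝ) 1) volume :=
    integrableOn_const measure_Ioo_lt_top.ne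
  have hFm : Measurable fun x : ℝ => Real.log (1 / x) :=
    Real.measurable_log.comp (measurable_const.div measurable_id)
  refine integrableOn_T_of_bound (fun x => Real.log (1 / x)) (fun _ => (4:ℝ)) hFm hM ?_
  rintro x ⟨hx0, hx1⟩
  have hsx : 0 < Real.sqrt x := Real.sqrt_pos.mpr hx0
  have hs : Real.sqrt (x - x ^ 2) ≤ Real.sqrt x := Real.sqrt_le_sqrt (by nlinarith)
  have hlog0 : 0 ≤ Real.log (1 / x) :=
    Real.log_nonneg (by rw [le_div_iff₀ hx0]; linarith)
  have hlogle : Real.log (1 / x) ≤ 2 * (Real.sqrt x)⁻¹ := by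
    have h1 : Real.log (1 / x) = 2 * Real.log (Real.sqrt x)⁻¹ := by
      rw [one_div, Real.log_inv, Real.log_inv, Real.log_sqrt hx0.le]; ring
    have h2 : Real.log (Real.sqrt x)⁻¹ ≤ (Real.sqrt x)⁻¹ - 1 :=
      Real.log_le_sub_one_of_pos (inv_pos.mpr hsx)
    rw [h1]
    nlinarith [inv_pos.mpr hsx]
  rw [_root_.abs_of_nonneg hlog0]
  calc Real.log (1 / x) * (2 * Real.sqrt (x - x ^ 2))
      ≤ (2 * (Real.sqrt x)⁻¹) * (2 * Real.sqrt x) := by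
        apply mul_le_mul hlogle (by linarith) (by positivity) (by positivity)
    _ = 4 := by field_simp; ring

lemma integrableOn_inv_T :
    IntegrableOn (fun p : ℝ × ℝ => (1 - p.1)⁻¹)
      {p : ℝ × ℝ | p.1 ^ 2 + p.2 ^ 2 < p.1} volume := by
  have hM : IntegrableOn (fun x : ℝ => 2 * (Real.sqrt (1 - x))⁻¹) (Ioo (0:ℝ) 1) volume := by
    have h1 : IntervalIntegrable (fun t : ℝ => t ^ (-(1/2) : ℝ)) volume 0 1 :=
      intervalIntegral.intervalIntegrable_rpow' (by norm_num)
    have h2 : IntervalIntegrable (fun x : ℝ => (1 - x) ^ (-(1/2) : ℝ)) volume 0 1 := by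
      have := (h1.comp_sub_left 1).symm
      norm_num at this
      exact this
    have h3 : IntegrableOn (fun x : ℝ => (1 - x) ^ (-(1/2) : ℝ)) (Ioo (0:ℝ) 1) volume :=
      ((intervalIntegrable_iff_integrableOn_Ioc_of_le (by norm_num : (0:ℝ) ≤ 1)).mp
        h2).mono_set Ioo_subset_Ioc_self
    refine (IntegrableOn.congr_fun (h3.const_mul 2) ?_ measurableSet_Ioo :
      IntegrableOn _ _ _)
    rintro x ⟨hx0, hx1⟩
    have h1x : (0:ℝ) ≤ 1 - x := by linarith
    simp only
    rw [Real.sqrt_eq_rpow, ← Real.rpow_neg h1x]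
  have hFm : Measurable fun x : ℝ => (1 - x)⁻¹ :=
    (measurable_const.sub measurable_id).inv
  refine integrableOn_T_of_bound (fun x => (1 - x)⁻¹)
    (fun x => 2 * (Real.sqrt (1 - x))⁻¹) hFm hM ?_
  rintro x ⟨hx0, hx1⟩
  have h1x : (0:ℝ) < 1 - x := by linarith
  have hs : Real.sqrt (x - x ^ 2) ≤ Real.sqrt (1 - x) := Real.sqrt_le_sqrt (by nlinarith)
  have hsx : 0 < Real.sqrt (1 - x) := Real.sqrt_pos.mpr h1x
  rw [_root_.abs_of_nonneg (inv_nonneg.mpr h1x.le)]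
  calc (1 - x)⁻¹ * (2 * Real.sqrt (x - x ^ 2))
      ≤ (1 - x)⁻¹ * (2 * Real.sqrt (1 - x)) := by
        apply mul_le_mul_of_nonneg_left (by linarith) (inv_nonneg.mpr h1x.le)
    _ = 2 * (Real.sqrt (1 - x))⁻¹ := by
        field_simp
        nlinarith [Real.mul_self_sqrt h1x.le]

lemma greenDensity_nonneg {z : ℂ} (hz : ‖z‖ ≤ 1) : 0 ≤ greenDensity z := by
  unfold greenDensity
  have h1 : 0 ≤ Real.log (1 / ‖z‖) := by
    rcases eq_or_lt_of_le (norm_nonneg z) with h | h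
    · simp [← h]
    · exact Real.log_nonneg (by rw [le_div_iff₀ h]; linarith)
  have h2 : 0 ≤ (1:ℝ) / Real.pi := by positivity
  positivity

set_option maxHeartbeats 800000 in
lemma greenDensity_le {x y : ℝ} (h : x ^ 2 + y ^ 2 < x) :
    greenDensity ⟨x, y⟩ ≤ (1 / Real.pi) * (Real.log (1 / x) * (64 / 9) + (1 - x)⁻¹ * 8) := by
  set a := ‖(⟨x, y⟩ : ℂ)‖ with ha
  have hs2 : a ^ 2 = x ^ 2 + y ^ 2 := by
    rw [ha, Complex.sq_norm, Complex.normSq_mk]; ring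
  have ha0' : 0 ≤ a := norm_nonneg _
  have hx0 : 0 < x := by nlinarith
  have hx1 : x < 1 := by nlinarith
  have hax : x ≤ a := by nlinarith
  have ha1 : a < 1 := by nlinarith
  have ha0 : 0 < a := lt_of_lt_of_le hx0 hax
  have hlog0 : 0 ≤ Real.log (1 / a) := Real.log_nonneg (by rw [le_div_iff₀ ha0]; linarith)
  have hlogx0 : 0 ≤ Real.log (1 / x) := Real.log_nonneg (by rw [le_div_iff₀ hx0]; linarith)
  have hu : 0 < 1 - a ^ 2 := by nlinarith
  have h1x : 0 < 1 - x := by linarith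
  have hrho : rho ⟨x, y⟩ = 2 / (1 - a ^ 2) := rfl
  have hgd : greenDensity ⟨x, y⟩
      = (1 / Real.pi) * (Real.log (1 / a) * (2 / (1 - a ^ 2)) ^ 2) := by
    unfold greenDensity
    rw [hrho, ← ha]; ring
  rw [hgd]
  apply mul_le_mul_of_nonneg_left _ (by positivity : (0:ℝ) ≤ 1 / Real.pi)
  have hloga : Real.log (1 / a) ≤ Real.log (1 / x) :=
    Real.log_le_log (by positivity) (one_div_le_one_div_of_le hx0 hax)
  by_cases hcase : a ^ 2 ≤ 1 / 4
  · -- small |z|: bounded density, log comparison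
    have hu34 : (3:ℝ) / 4 ≤ 1 - a ^ 2 := by linarith
    have hR : (2 / (1 - a ^ 2)) ^ 2 ≤ 64 / 9 := by
      have h1 : (2:ℝ) / (1 - a ^ 2) ≤ 8 / 3 := by
        rw [div_le_iff₀ hu]; nlinarith
      have h2 : (0:ℝ) ≤ 2 / (1 - a ^ 2) := by positivity
      nlinarith
    have : Real.log (1 / a) * (2 / (1 - a ^ 2)) ^ 2 ≤ Real.log (1 / x) * (64 / 9) :=
      mul_le_mul hloga hR (by positivity) hlogx0
    nlinarith [inv_nonneg.mpr h1x.le]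
  · -- large |z|: log(1/|z|) ≤ (1-|z|²)/(2|z|²)
    push_neg at hcase
    set s := a ^ 2 with hsdef
    have hs0 : 0 < s := by positivity
    have hsx' : s < x := by rw [hs2]; exact h
    have hLs : Real.log (1 / a) = Real.log (1 / s) / 2 := by
      rw [hsdef, show (1:ℝ) / a ^ 2 = (1 / a) ^ 2 by ring, Real.log_pow]
      push_cast; ring
    have hlogs : Real.log (1 / s) ≤ 1 / s - 1 := by
      have := Real.log_le_sub_one_of_pos (by positivity : (0:ℝ) < 1 / s)
      linarith
    have hls2 : Real.log (1 / s) * s ≤ 1 - s := by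
      have h' := mul_le_mul_of_nonneg_right hlogs hs0.le
      have h'' : (1 / s - 1) * s = 1 - s := by field_simp
      linarith
    have hL : Real.log (1 / a) ≤ (1 - s) / (2 * s) := by
      rw [hLs, div_le_div_iff₀ (by norm_num) (by positivity)]
      nlinarith [hls2]
    have husx : 0 < 1 - s := hu
    have step1 : Real.log (1 / a) * (2 / (1 - s)) ^ 2
        ≤ ((1 - s) / (2 * s)) * (2 / (1 - s)) ^ 2 :=
      mul_le_mul_of_nonneg_right hL (by positivity)
    have step2 : ((1 - s) / (2 * s)) * (2 / (1 - s)) ^ 2 = 2 / (s * (1 - s)) := by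
      field_simp
    have step3 : 2 / (s * (1 - s)) ≤ 8 / (1 - s) := by
      rw [div_le_div_iff₀ (by positivity) husx]
      nlinarith [mul_nonneg husx.le (by linarith : (0:ℝ) ≤ 8 * s - 2)]
    have step4 : 8 / (1 - s) ≤ (1 - x)⁻¹ * 8 := by
      rw [inv_eq_one_div, div_mul_eq_mul_div, mul_comm]
      rw [div_le_div_iff₀ husx h1x]
      nlinarith
    calc Real.log (1 / a) * (2 / (1 - s)) ^ 2
        ≤ ((1 - s) / (2 * s)) * (2 / (1 - s)) ^ 2 := step1
      _ = 2 / (s * (1 - s)) := step2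
      _ ≤ 8 / (1 - s) := step3
      _ ≤ (1 - x)⁻¹ * 8 := step4
      _ ≤ Real.log (1 / x) * (64 / 9) + (1 - x)⁻¹ * 8 :=
          le_add_of_nonneg_left (mul_nonneg hlogx0 (by norm_num))

lemma preimage_ball_eq_T :
    (Complex.measurableEquivRealProd.symm) ⁻¹' (Metric.ball ((1:ℂ)/2) (1/2))
      = {p : ℝ × ℝ | p.1 ^ 2 + p.2 ^ 2 < p.1} := by
  ext ⟨x, y⟩
  simp only [mem_preimage, Metric.mem_ball, Complex.measurableEquivRealProd_symm_apply,
    Complex.dist_eq, mem_setOf_eq]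
  have h1 : ‖(⟨x, y⟩ : ℂ) - 1 / 2‖ ^ 2 = (x - 1 / 2) ^ 2 + y ^ 2 := by
    rw [Complex.sq_norm, Complex.normSq_apply]
    simp [Complex.sub_re, Complex.sub_im]
    ring
  have h2 : 0 ≤ ‖(⟨x, y⟩ : ℂ) - 1 / 2‖ := norm_nonneg _
  constructor <;> intro hlt
  · nlinarith
  · nlinarith

lemma integrableOn_base :
    IntegrableOn greenDensity (Metric.ball ((1:ℂ)/2) (1/2)) volume := by
  have hmp : MeasurePreserving (Complex.measurableEquivRealProd.symm) volume volume :=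
    Complex.volume_preserving_equiv_real_prod.symm _
  rw [← hmp.integrableOn_comp_preimage (MeasurableEquiv.measurableEmbedding _),
    preimage_ball_eq_T]
  have hG : IntegrableOn
      (fun p : ℝ × ℝ => (1 / Real.pi) * (Real.log (1 / p.1) * (64 / 9) + (1 - p.1)⁻¹ * 8))
      {p : ℝ × ℝ | p.1 ^ 2 + p.2 ^ 2 < p.1} volume :=
    (((integrableOn_log_T.mul_const (64 / 9)).add (integrableOn_inv_T.mul_const 8)).const_mul
      (1 / Real.pi))
  refine Integrable.mono' hG ?_ ?_
  · exact (measurable_greenDensity.comp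
      (Complex.measurableEquivRealProd.symm.measurable)).aestronglyMeasurable
  · rw [ae_restrict_iff' measurableSet_T]
    filter_upwards with p hp
    obtain ⟨x, y⟩ := p
    have hp' : x ^ 2 + y ^ 2 < x := hp
    have hz : Complex.measurableEquivRealProd.symm (x, y) = (⟨x, y⟩ : ℂ) :=
      Complex.measurableEquivRealProd_symm_apply (x, y)
    simp only [Function.comp_apply, hz]
    have habs : ‖(⟨x, y⟩ : ℂ)‖ ≤ 1 := by
      have h1 : ‖(⟨x, y⟩ : ℂ)‖ ^ 2 = x ^ 2 + y ^ 2 := by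
        rw [Complex.sq_norm, Complex.normSq_mk]; ring
      refine (pow_le_one_iff_of_nonneg (norm_nonneg _) two_ne_zero).mp ?_
      rw [h1]; nlinarith [sq_nonneg y]
    rw [Real.norm_eq_abs, _root_.abs_of_nonneg (greenDensity_nonneg habs)]
    exact greenDensity_le hp'

lemma horoball_transfer (c : ℂ) (hc : ‖c‖ = 1 / 2) :
    IntegrableOn greenDensity (Metric.ball c (1/2)) volume ∧
    ∫ z in Metric.ball c (1/2), greenDensity z
      = ∫ z in Metric.ball ((1:ℂ)/2) (1/2), greenDensity z := by
  have habs : ‖2 * c‖ = 1 := by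
    rw [norm_mul, Complex.norm_two, hc]; norm_num
  set a : Circle := ⟨2 * c, mem_sphere_zero_iff_norm.mpr habs⟩ with ha
  set e := rotation a with he
  have hmp : MeasurePreserving (e : ℂ → ℂ) volume volume := e.measurePreserving
  have hemb : MeasurableEmbedding (e : ℂ → ℂ) := e.toHomeomorph.measurableEmbedding
  have hgd : ∀ z : ℂ, greenDensity (e z) = greenDensity z := by
    intro z
    unfold greenDensity rho
    rw [he, rotation_apply, norm_mul, show ‖(a : ℂ)‖ = 1 from Circle.norm_coe a,
      one_mul]
  have himg : (e : ℂ → ℂ) '' Metric.ball ((1:ℂ)/2) (1/2) = Metric.ball c (1/2) := by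
    have h1 : (e : ℂ → ℂ) '' Metric.ball ((1:ℂ)/2) (1/2)
        = Metric.ball (e ((1:ℂ)/2)) (1/2) := by
      rw [← LinearIsometryEquiv.coe_toIsometryEquiv]
      exact e.toIsometryEquiv.image_ball _ _
    rw [h1, show e ((1:ℂ)/2) = c by rw [he, rotation_apply]; show 2 * c * (1/2) = c; ring]
  constructor
  · rw [← himg, hmp.integrableOn_image hemb,
      show (greenDensity ∘ (e : ℂ → ℂ)) = greenDensity from funext hgd]
    exact integrableOn_base
  · rw [← himg, hmp.setIntegral_image_emb hemb]
    simp only [hgd]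

/-- for a horoball `B = ball c r ⊆ 𝔻` (internally tangent to the unit
circle, i.e. `|c| = 1 - r`) whose boundary passes through the origin (`|c| = r`), the
integral `∫_B (1/π) log(1/|z|) ρ(z)² dA(z)` is finite; moreover its value is
independent of the horoball: it is the same for all horoballs whose boundary contains
`0`.  This integral is the expected total time hyperbolic Brownian motion started at
a boundary point of a horoball spends inside the horoball (by conformal invariance). -/
theorem horoball_occupation_finite :
    (∀ (c : ℂ) (r : ℝ), 0 < r → ‖c‖ = 1 - r → ‖c‖ = r →
      IntegrableOn greenDensity (Metric.ball c r) volume) ∧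
    (∀ (c c' : ℂ) (r r' : ℝ), 0 < r → ‖c‖ = 1 - r → ‖c‖ = r →
      0 < r' → ‖c'‖ = 1 - r' → ‖c'‖ = r' →
      ∫ z in Metric.ball c r, greenDensity z = ∫ z in Metric.ball c' r', greenDensity z) := by
  have key : ∀ (c : ℂ) (r : ℝ), 0 < r → ‖c‖ = 1 - r → ‖c‖ = r →
      r = 1 / 2 ∧ ‖c‖ = 1 / 2 := by
    intro c r _ h1 h2
    have : r = 1 / 2 := by rw [h1] at h2; linarith
    exact ⟨this, by rw [h2, this]⟩
  constructor
  · intro c r hr h1 h2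
    obtain ⟨hr2, hc2⟩ := key c r hr h1 h2
    subst hr2
    exact (horoball_transfer c hc2).1
  · intro c c' r r' hr h1 h2 hr' h1' h2'
    obtain ⟨hr2, hc2⟩ := key c r hr h1 h2
    obtain ⟨hr2', hc2'⟩ := key c' r' hr' h1' h2'
    subst hr2; subst hr2'
    exact (horoball_transfer c hc2).2.trans (horoball_transfer c' hc2').2.symm
end
end

section
/- Let R > 0 and let B ⊂ 𝔻 be a horoball resting on the point 1 whose hyperbolic distance from the origin equals R/2. Then ∫_B (1/π) log(1/|z|) · (2/(1-|z|²))² dA(z) ≍ e^{-R/2}, i.e. there are absolute constants 0 < c ≤ C such that the integral lies in [c e^{-R/2}, C e^{-R/2}] for all sufficiently large R. -/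
open MeasureTheory Complex Set

noncomputable section

/-- Hyperbolic distance from the origin: `d_𝔻(0, z) = log((1 + |z|)/(1 - |z|))`. -/
def hypDist0 (z : ℂ) : ℝ := Real.log ((1 + ‖z‖) / (1 - ‖z‖))

/-- The horoball resting on `1` of Euclidean radius `r`. -/
def horoballAtOne (r : ℝ) : Set ℂ := Metric.ball ((1 - r : ℝ) : ℂ) r

open scoped ENNReal


lemma sInf_horoball {r : ℝ} (h0 : 0 < r) (h1 : r < 1/2) :
    sInf (hypDist0 '' horoballAtOne r) = Real.log ((1 - r)/r) := by
  have hmem : ∀ z ∈ horoballAtOne r, 1 - 2*r < ‖z‖ ∧ ‖z‖ < 1 := by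
    intro z hz
    rw [horoballAtOne, Metric.mem_ball, Complex.dist_eq] at hz
    have hsq : (z.re - (1 - r))^2 + z.im^2 < r^2 := by
      have hh := Complex.sq_norm (z - ((1 - r : ℝ) : ℂ))
      have h2 : ‖z - ((1-r:ℝ):ℂ)‖ ^ 2 < r ^ 2 := by
        have := norm_nonneg (z - ((1-r:ℝ):ℂ)); nlinarith
      rw [hh] at h2
      simp [Complex.normSq_apply, Complex.sub_re, Complex.sub_im, Complex.ofReal_re,
        Complex.ofReal_im] at h2
      nlinarith [h2]
    have hx2 : ‖z‖ ^ 2 = z.re^2 + z.im^2 := by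
      rw [Complex.sq_norm, Complex.normSq_apply]; ring
    have hret : 0 < 1 - z.re := by nlinarith
    have hxnn := norm_nonneg z
    have hrele : z.re ≤ ‖z‖ := Complex.re_le_norm z
    constructor
    · nlinarith
    · nlinarith
  apply IsGLB.csInf_eq
  · constructor
    · rintro a ⟨z, hz, rfl⟩
      obtain ⟨hl, hu⟩ := hmem z hz
      have hx1 : 0 < 1 - ‖z‖ := by linarith
      have h2 : (1 - r)/r ≤ (1 + ‖z‖) / (1 - ‖z‖) := by
        rw [div_le_div_iff₀ h0 hx1]; nlinarith
      exact Real.log_le_log (div_pos (by linarith) h0) h2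
    · intro b hb
      have hb' : ∀ δ ∈ Ioo (0:ℝ) r, b ≤ Real.log ((2 - 2*r + δ)/(2*r - δ)) := by
        intro δ hδ
        obtain ⟨hδ0, hδr⟩ := hδ
        have hzmem : ((1 - 2*r + δ : ℝ) : ℂ) ∈ horoballAtOne r := by
          rw [horoballAtOne, Metric.mem_ball, Complex.dist_eq]
          have : ((1 - 2*r + δ : ℝ) : ℂ) - ((1 - r : ℝ) : ℂ) = ((δ - r : ℝ) : ℂ) := by
            push_cast; ring
          rw [this, Complex.norm_real, Real.norm_eq_abs, abs_of_neg (by linarith)]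
          linarith
        have := hb ⟨_, hzmem, rfl⟩
        rw [hypDist0, Complex.norm_real, Real.norm_eq_abs, abs_of_pos (by linarith)] at this
        rw [show (2 - 2*r + δ)/(2*r - δ) = (1 + (1-2*r+δ))/(1 - (1-2*r+δ)) by ring]; exact this
      have hcont : Filter.Tendsto (fun δ : ℝ => Real.log ((2 - 2*r + δ)/(2*r - δ)))
          (nhdsWithin 0 (Ioi 0)) (nhds (Real.log ((1 - r)/r))) := by
        have h2 : (2 - 2*r + (0:ℝ))/(2*r - 0) = (1-r)/r := by
          field_simp; ring
        have hc : ContinuousAt (fun δ : ℝ => Real.log ((2 - 2*r + δ)/(2*r - δ))) 0 := by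
          apply ContinuousAt.log
          · apply ContinuousAt.div (by fun_prop) (by fun_prop)
            simp; linarith
          · rw [h2]
            exact ne_of_gt (div_pos (by linarith) h0)
        have := hc.tendsto
        rw [h2] at this
        exact this.mono_left nhdsWithin_le_nhds
      apply ge_of_tendsto hcont
      filter_upwards [Ioo_mem_nhdsGT_of_mem (left_mem_Ico.2 h0)] with δ hδ
      exact hb' δ hδ
  · exact ⟨_, mem_image_of_mem _ (by rw [horoballAtOne]; exact Metric.mem_ball_self h0)⟩


lemma pt_lower {r : ℝ} (h0 : 0 < r) {x t : ℝ} (hx0 : (1:ℝ)/2 ≤ x) (hx1 : x < 1)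
    (hle : 1 - x ≤ t) (ht : t < 2*r) :
    1/(2*Real.pi*r) ≤ (1/Real.pi) * Real.log (1/x) * (2/(1 - x^2))^2 := by
  have hpi := Real.pi_pos
  have hx0' : (0:ℝ) < x := by linarith
  have hu : 0 < 1 - x := by linarith
  have hlog : 1 - x ≤ Real.log (1/x) := by
    have := Real.log_le_sub_one_of_pos hx0'
    rw [one_div, Real.log_inv]; linarith
  have hsq : 0 < 1 - x^2 := by nlinarith
  have hrho : 1/(1-x) ≤ 2/(1 - x^2) := by
    rw [div_le_div_iff₀ hu hsq]; nlinarith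
  have hrho0 : (0:ℝ) < 1/(1-x) := by positivity
  have hrhosq : (1/(1-x))^2 ≤ (2/(1 - x^2))^2 := by
    apply sq_le_sq' (by nlinarith) hrho
  have hmain : 1/Real.pi * ((1-x) * (1/(1-x))^2) ≤
      1/Real.pi * (Real.log (1/x) * (2/(1 - x^2))^2) := by
    apply mul_le_mul_of_nonneg_left _ (by positivity)
    apply mul_le_mul hlog hrhosq (by positivity) (by linarith)
  calc 1/(2*Real.pi*r) ≤ 1/(Real.pi*(1-x)) := by
        apply one_div_le_one_div_of_le (by positivity); nlinarith
    _ = 1/Real.pi * ((1-x) * (1/(1-x))^2) := by field_simp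
    _ ≤ 1/Real.pi * (Real.log (1/x) * (2/(1 - x^2))^2) := hmain
    _ = 1/Real.pi * Real.log (1/x) * (2/(1 - x^2))^2 := by ring

lemma pt_upper {x t : ℝ} (hx0 : (1:ℝ)/2 ≤ x) (hx1 : x < 1)
    (ht0 : 0 < t) (hle : t/2 ≤ 1 - x) :
    (1/Real.pi) * Real.log (1/x) * (2/(1 - x^2))^2 ≤ (16/Real.pi) / t := by
  have hpi := Real.pi_pos
  have hx0' : (0:ℝ) < x := by linarith
  have hu : 0 < 1 - x := by linarith
  have hlog : Real.log (1/x) ≤ 2*(1-x) := by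
    have := Real.log_le_sub_one_of_pos (show (0:ℝ) < 1/x by positivity)
    have h2 : 1/x - 1 = (1-x)/x := by field_simp
    have h3 : (1-x)/x ≤ 2*(1-x) := by
      rw [div_le_iff₀ hx0']; nlinarith
    linarith
  have hsqpos : 0 < 1 - x^2 := by nlinarith
  have hrho : 2/(1 - x^2) ≤ 2/(1-x) := by
    rw [div_le_div_iff₀ hsqpos hu]; nlinarith
  have hrho0 : (0:ℝ) ≤ 2/(1-x^2) := by positivity
  have hrhosq : (2/(1 - x^2))^2 ≤ (2/(1-x))^2 := by
    apply sq_le_sq' (by nlinarith) hrho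
  have hlog0 : 0 ≤ Real.log (1/x) := Real.log_nonneg (by rw [le_div_iff₀ hx0']; linarith)
  calc (1/Real.pi) * Real.log (1/x) * (2/(1 - x^2))^2
      ≤ (1/Real.pi) * (2*(1-x)) * (2/(1-x))^2 := by
        apply mul_le_mul (mul_le_mul_of_nonneg_left hlog (by positivity)) hrhosq (by positivity)
          (by positivity)
    _ = (8/Real.pi) / (1-x) := by field_simp; ring
    _ ≤ (16/Real.pi) / t := by
        have h2 : (8*t)/Real.pi ≤ (16*(1-x))/Real.pi := by
          apply (div_le_div_iff_of_pos_right hpi).mpr; linarith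
        rw [div_le_div_iff₀ hu ht0]
        have e1 : 8/Real.pi*t = (8*t)/Real.pi := by ring
        have e2 : 16/Real.pi*(1-x) = (16*(1-x))/Real.pi := by ring
        rw [e1, e2]; exact h2

lemma horoball_facts {r : ℝ} (h0 : 0 < r) (h1 : r ≤ 1/100) {z : ℂ}
    (hz : z ∈ horoballAtOne r) :
    1 - 2*r < ‖z‖ ∧ ‖z‖ < 1 ∧ 0 < 1 - z.re ∧ 1 - z.re < 2*r ∧
    1 - ‖z‖ ≤ 1 - z.re ∧ (1 - z.re)/2 ≤ 1 - ‖z‖ ∧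
    z.im^2 < 2*r*(1 - z.re) := by
  rw [horoballAtOne, Metric.mem_ball, Complex.dist_eq] at hz
  have hsq : (z.re - (1 - r))^2 + z.im^2 < r^2 := by
    have hh := Complex.sq_norm (z - ((1 - r : ℝ) : ℂ))
    have h2 : ‖z - ((1-r:ℝ):ℂ)‖ ^ 2 < r ^ 2 := by
      have := norm_nonneg (z - ((1-r:ℝ):ℂ)); nlinarith
    rw [hh] at h2
    simp [Complex.normSq_apply, Complex.sub_re, Complex.sub_im, Complex.ofReal_re,
      Complex.ofReal_im] at h2
    nlinarith [h2]
  have hx2 : ‖z‖ ^ 2 = z.re^2 + z.im^2 := by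
    rw [Complex.sq_norm, Complex.normSq_apply]; ring
  have him : z.im^2 < 2*r*(1 - z.re) := by nlinarith
  have hret : 0 < 1 - z.re := by nlinarith
  have hret2 : 1 - z.re < 2*r := by nlinarith
  have hxlt : ‖z‖ ^ 2 < 1 - 2*(1-r)*(1 - z.re) := by nlinarith
  have hxnn := norm_nonneg z
  have hx1 : ‖z‖ < 1 := by nlinarith
  have hrele : z.re ≤ ‖z‖ := Complex.re_le_norm z
  have hlow : 1 - 2*r < ‖z‖ := by nlinarith
  have hkey : (1 - z.re)/2 ≤ 1 - ‖z‖ := by nlinarith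
  exact ⟨hlow, hx1, hret, hret2, by linarith, hkey, him⟩

lemma f_lower {r : ℝ} (h0 : 0 < r) (h1 : r ≤ 1/100) {z : ℂ} (hz : z ∈ horoballAtOne r) :
    1/(2*Real.pi*r) ≤ (1 / Real.pi) * Real.log (1 / ‖z‖) * rho z ^ 2 := by
  obtain ⟨hl, hu, ht0, ht2, hle, hge, him⟩ := horoball_facts h0 h1 hz
  have := pt_lower h0 (x := ‖z‖) (t := 1 - z.re) (by linarith) hu hle ht2
  simpa only [rho] using this

lemma f_upper {r : ℝ} (h0 : 0 < r) (h1 : r ≤ 1/100) {z : ℂ} (hz : z ∈ horoballAtOne r) :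
    (1 / Real.pi) * Real.log (1 / ‖z‖) * rho z ^ 2 ≤ (16/Real.pi) / (1 - z.re) := by
  obtain ⟨hl, hu, ht0, ht2, hle, hge, him⟩ := horoball_facts h0 h1 hz
  have := pt_upper (x := ‖z‖) (t := 1 - z.re) (by linarith) hu ht0 hge
  simpa only [rho] using this

lemma fmeas : Measurable (fun z : ℂ => (1 / Real.pi) * Real.log (1 / ‖z‖) * rho z ^ 2) := by
  have habs : Measurable fun z : ℂ => ‖z‖ := continuous_norm.measurable
  apply Measurable.mul
  · exact measurable_const.mul (Real.measurable_log.comp (measurable_const.div habs))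
  · simp only [rho]
    exact ((measurable_const.div ((measurable_const.sub (habs.pow_const 2))))).pow_const 2

lemma lint_lower {r : ℝ} (h0 : 0 < r) (h1 : r ≤ 1/100) :
    ENNReal.ofReal (r/2)
      ≤ ∫⁻ z in horoballAtOne r,
          ENNReal.ofReal ((1 / Real.pi) * Real.log (1 / ‖z‖) * rho z ^ 2) := by
  have hpi := Real.pi_pos
  have h1' : ∫⁻ _ in horoballAtOne r, ENNReal.ofReal (1/(2*Real.pi*r))
      = ENNReal.ofReal (1/(2*Real.pi*r)) * volume (horoballAtOne r) :=
    setLIntegral_const _ _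
  have h2 : ENNReal.ofReal (1/(2*Real.pi*r)) * volume (horoballAtOne r)
      = ENNReal.ofReal (r/2) := by
    rw [horoballAtOne, Complex.volume_ball]
    rw [← ENNReal.ofReal_pow h0.le, ← NNReal.coe_real_pi, ENNReal.ofReal_coe_nnreal.symm,
      ← ENNReal.ofReal_mul (by positivity), ← ENNReal.ofReal_mul (by positivity)]
    congr 1
    rw [NNReal.coe_real_pi]
    field_simp
  rw [← h2, ← h1']
  apply setLIntegral_mono (ENNReal.measurable_ofReal.comp fmeas)
  intro z hz
  exact ENNReal.ofReal_le_ofReal (f_lower h0 h1 hz)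

lemma lint_upper {r : ℝ} (h0 : 0 < r) (h1 : r ≤ 1/100) :
    (∫⁻ z in horoballAtOne r,
        ENNReal.ofReal ((1 / Real.pi) * Real.log (1 / ‖z‖) * rho z ^ 2))
      ≤ ENNReal.ofReal (128 * r) := by
  have hpi := Real.pi_pos
  set c : ℝ := 16 / Real.pi with hc
  have hc0 : 0 < c := by positivity
  set s : ℝ → ℝ := fun x => Real.sqrt (2*r*(1-x)) with hs
  have hscont : Continuous s := by
    apply Real.continuous_sqrt.comp; fun_prop
  set S : Set (ℝ × ℝ) :=
    {p : ℝ × ℝ | p.1 ∈ Ioo (1-2*r) 1 ∧ p.2 ∈ Ioo (-(s p.1)) (s p.1)} with hS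
  have hSmeas : MeasurableSet S := by
    have : S = ({p : ℝ×ℝ | 1-2*r < p.1} ∩ {p | p.1 < 1}) ∩
        ({p | -(s p.1) < p.2} ∩ {p | p.2 < s p.1}) := by
      ext p
      simp only [hS, Set.mem_setOf_eq, mem_Ioo, Set.mem_inter_iff]
    rw [this]
    refine ((measurableSet_lt measurable_const measurable_fst).inter
      (measurableSet_lt measurable_fst measurable_const)).inter
      (MeasurableSet.inter ?_ ?_)
    · exact measurableSet_lt ((hscont.measurable.comp measurable_fst).neg) measurable_snd
    · exact measurableSet_lt measurable_snd (hscont.measurable.comp measurable_fst)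
  set T : Set ℂ := Complex.measurableEquivRealProd ⁻¹' S with hT
  have hTmeas : MeasurableSet T := Complex.measurableEquivRealProd.measurable hSmeas
  set G : ℂ → ℝ≥0∞ := fun z => ENNReal.ofReal (c / (1 - z.re)) with hG
  have hGmeas : Measurable G :=
    ENNReal.measurable_ofReal.comp (measurable_const.div (measurable_const.sub Complex.measurable_re))
  have hBT : horoballAtOne r ⊆ T := by
    intro z hz
    obtain ⟨hl, hu, ht0, ht2, hle, hge, him⟩ := horoball_facts h0 h1 hz
    have him' : |z.im| < s z.re := by
      rw [hs]
      rw [show |z.im| = Real.sqrt (z.im^2) by rw [Real.sqrt_sq_eq_abs]]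
      exact Real.sqrt_lt_sqrt (sq_nonneg _) him
    constructor
    · constructor <;> simp only [Complex.measurableEquivRealProd_apply] <;> [linarith; linarith]
    · rw [Set.mem_Ioo]
      constructor
      · have := neg_abs_le z.im; simp only [Complex.measurableEquivRealProd_apply]; nlinarith [abs_nonneg z.im]
      · have := le_abs_self z.im; simp only [Complex.measurableEquivRealProd_apply]; linarith
  -- step 1: bound by integral over T of G
  have step1 : (∫⁻ z in horoballAtOne r,
        ENNReal.ofReal ((1 / Real.pi) * Real.log (1 / ‖z‖) * rho z ^ 2))
      ≤ ∫⁻ z in T, G z := by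
    calc (∫⁻ z in horoballAtOne r,
        ENNReal.ofReal ((1 / Real.pi) * Real.log (1 / ‖z‖) * rho z ^ 2))
        ≤ ∫⁻ z in horoballAtOne r, G z := by
          apply setLIntegral_mono hGmeas
          intro z hz
          exact ENNReal.ofReal_le_ofReal (f_upper h0 h1 hz)
      _ ≤ ∫⁻ z in T, G z := lintegral_mono_set hBT
  -- step 2: transfer to ℝ × ℝ
  set F : ℝ × ℝ → ℝ≥0∞ := S.indicator (fun p => ENNReal.ofReal (c / (1 - p.1))) with hF
  have hFmeas : Measurable F :=
    (ENNReal.measurable_ofReal.comp (measurable_const.div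
      (measurable_const.sub measurable_fst))).indicator hSmeas
  have step2 : ∫⁻ z in T, G z = ∫⁻ p : ℝ × ℝ, F p := by
    rw [← lintegral_indicator hTmeas]
    rw [← (Complex.volume_preserving_equiv_real_prod.symm _).lintegral_comp
      (hGmeas.indicator hTmeas)]
    apply lintegral_congr
    intro p
    by_cases hp : p ∈ S
    · rw [Set.indicator_of_mem (by simpa [hT] using hp), hF, Set.indicator_of_mem hp]
      rfl
    · rw [Set.indicator_of_notMem (by simpa [hT] using hp), hF, Set.indicator_of_notMem hp]
  -- step 3: Tonelli
  have step3 : (∫⁻ p : ℝ × ℝ, F p) = ∫⁻ x : ℝ, ∫⁻ y : ℝ, F (x, y) := by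
    rw [MeasureTheory.Measure.volume_eq_prod]
    exact lintegral_prod F hFmeas.aemeasurable
  -- step 4: inner integral
  have step4 : ∀ x : ℝ, (∫⁻ y : ℝ, F (x, y)) =
      (Ioo (1-2*r) 1).indicator
        (fun x => ENNReal.ofReal (c/(1-x)) * ENNReal.ofReal (2 * s x)) x := by
    intro x
    by_cases hx : x ∈ Ioo (1-2*r) 1
    · have hfun : (fun y => F (x, y)) =
          (Ioo (-(s x)) (s x)).indicator (fun _ => ENNReal.ofReal (c/(1-x))) := by
        funext y
        by_cases hy : y ∈ Ioo (-(s x)) (s x)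
        · rw [hF, Set.indicator_of_mem (show (x,y) ∈ S from ⟨hx, hy⟩), Set.indicator_of_mem hy]
        · rw [hF, Set.indicator_of_notMem (fun hmem => hy hmem.2), Set.indicator_of_notMem hy]
      rw [hfun, lintegral_indicator measurableSet_Ioo, setLIntegral_const, Real.volume_Ioo,
        Set.indicator_of_mem hx]
      congr 1
      ring
    · have hfun : (fun y => F (x, y)) = fun _ => 0 := by
        funext y
        rw [hF, Set.indicator_of_notMem (fun hmem => hx hmem.1)]
      rw [hfun, lintegral_const, zero_mul, Set.indicator_of_notMem hx]
  -- step 5: rewrite outer integrand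
  set K : ℝ := 2 * c * Real.sqrt (2*r) with hK
  have hK0 : 0 ≤ K := by positivity
  have step5 : (∫⁻ x : ℝ, (Ioo (1-2*r) 1).indicator
      (fun x => ENNReal.ofReal (c/(1-x)) * ENNReal.ofReal (2 * s x)) x)
      = ∫⁻ x in Ioo (1-2*r) 1, ENNReal.ofReal (K / Real.sqrt (1-x)) := by
    rw [lintegral_indicator measurableSet_Ioo]
    apply setLIntegral_congr_fun measurableSet_Ioo
    intro x hx
    obtain ⟨hx1, hx2⟩ := hx
    have h1x : 0 < 1 - x := by linarith
    beta_reduce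
    rw [← ENNReal.ofReal_mul (by positivity)]
    congr 1
    rw [hs, hK]
    simp only
    rw [show 2*r*(1-x) = (2*r)*(1-x) by ring, Real.sqrt_mul (by positivity)]
    have hmul : Real.sqrt (1-x) * Real.sqrt (1-x) = 1-x := Real.mul_self_sqrt h1x.le
    have hne : Real.sqrt (1-x) ≠ 0 := ne_of_gt (Real.sqrt_pos.2 h1x)
    rw [eq_div_iff hne, div_mul_eq_mul_div, div_mul_eq_mul_div, div_eq_iff (ne_of_gt h1x)]
    linear_combination (2*c*Real.sqrt (2*r)) * hmul
  -- step 6: integrability of the outer integrand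
  have hEq : EqOn (fun x : ℝ => K * (1-x) ^ (-(1/2) : ℝ)) (fun x => K / Real.sqrt (1-x))
      (Ioo (1-2*r) 1) := by
    intro x hx
    obtain ⟨hx1, hx2⟩ := hx
    have h1x : 0 < 1 - x := by linarith
    simp only
    rw [Real.rpow_neg h1x.le, Real.sqrt_eq_rpow]
    exact (div_eq_mul_inv K _).symm
  have hiio : IntegrableOn (fun x : ℝ => (1-x) ^ (-(1/2) : ℝ)) (Ioo (1-2*r) 1) := by
    have hii : IntervalIntegrable (fun x : ℝ => x ^ (-(1/2) : ℝ)) volume 0 (2*r) :=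
      intervalIntegral.intervalIntegrable_rpow' (by norm_num)
    have hii2 := (hii.comp_sub_left 1).symm
    simp only [sub_zero] at hii2
    have h3 : IntegrableOn (fun x : ℝ => (1 - x) ^ (-(1/2) : ℝ)) (Set.uIoc (1-2*r) 1) volume :=
      intervalIntegrable_iff.mp hii2
    rw [Set.uIoc_of_le (by linarith : 1-2*r ≤ 1)] at h3
    exact h3.mono_set Ioo_subset_Ioc_self
  have hiK : IntegrableOn (fun x : ℝ => K / Real.sqrt (1-x)) (Ioo (1-2*r) 1) :=
    IntegrableOn.congr_fun (hiio.const_mul K) hEq measurableSet_Ioo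
  -- step 7: value of the outer integral
  have hval : (∫ x in Ioo (1-2*r) 1, K / Real.sqrt (1-x)) = K * (2 * Real.sqrt (2*r)) := by
    rw [← setIntegral_congr_fun measurableSet_Ioo hEq]
    rw [← integral_Ioc_eq_integral_Ioo,
      ← intervalIntegral.integral_of_le (by linarith : 1-2*r ≤ 1)]
    rw [intervalIntegral.integral_const_mul]
    have hsub := intervalIntegral.integral_comp_sub_left
      (a := 1-2*r) (b := 1) (fun x : ℝ => x ^ (-(1/2) : ℝ)) 1
    simp only [sub_self, sub_sub_cancel] at hsub
    rw [hsub]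
    rw [integral_rpow (Or.inl (by norm_num : (-1:ℝ) < -(1/2)))]
    have he : (-(1/2) + 1 : ℝ) = 1/2 := by norm_num
    rw [he, Real.zero_rpow (by norm_num : (1/2 : ℝ) ≠ 0), Real.sqrt_eq_rpow]
    ring
  have step7 : (∫⁻ x in Ioo (1-2*r) 1, ENNReal.ofReal (K / Real.sqrt (1-x)))
      = ENNReal.ofReal (K * (2 * Real.sqrt (2*r))) := by
    rw [← ofReal_integral_eq_lintegral_ofReal hiK
      (ae_of_all _ (fun x => by positivity))]
    rw [hval]
  -- put it all together
  have hfinal : K * (2 * Real.sqrt (2*r)) ≤ 128 * r := by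
    have hss : Real.sqrt (2*r) * Real.sqrt (2*r) = 2*r := Real.mul_self_sqrt (by linarith)
    have hpile : (1:ℝ) ≤ Real.pi := by nlinarith [Real.pi_gt_three]
    have hcle : c ≤ 16 := by
      rw [hc]; rw [div_le_iff₀ hpi]; nlinarith
    have h8 : K * (2 * Real.sqrt (2*r)) = 8*c*r := by
      rw [hK]; linear_combination (4*c) * hss
    rw [h8]
    nlinarith [mul_nonneg (show (0:ℝ) ≤ 16 - c by linarith) h0.le]
  calc (∫⁻ z in horoballAtOne r,
        ENNReal.ofReal ((1 / Real.pi) * Real.log (1 / ‖z‖) * rho z ^ 2))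
      ≤ ∫⁻ z in T, G z := step1
    _ = ∫⁻ p : ℝ × ℝ, F p := step2
    _ = ∫⁻ x : ℝ, ∫⁻ y : ℝ, F (x, y) := step3
    _ = ∫⁻ x : ℝ, (Ioo (1-2*r) 1).indicator
        (fun x => ENNReal.ofReal (c/(1-x)) * ENNReal.ofReal (2 * s x)) x := by
        apply lintegral_congr; intro x; exact step4 x
    _ = ∫⁻ x in Ioo (1-2*r) 1, ENNReal.ofReal (K / Real.sqrt (1-x)) := step5
    _ = ENNReal.ofReal (K * (2 * Real.sqrt (2*r))) := step7
    _ ≤ ENNReal.ofReal (128 * r) := ENNReal.ofReal_le_ofReal hfinal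


lemma integral_bounds {r : ℝ} (h0 : 0 < r) (h1 : r ≤ 1/100) :
    r/2 ≤ (∫ z in horoballAtOne r, (1 / Real.pi) * Real.log (1 / ‖z‖) * rho z ^ 2) ∧
    (∫ z in horoballAtOne r, (1 / Real.pi) * Real.log (1 / ‖z‖) * rho z ^ 2)
      ≤ 128*r := by
  have hpi := Real.pi_pos
  have hBmeas : MeasurableSet (horoballAtOne r) := Metric.isOpen_ball.measurableSet
  have hnn : 0 ≤ᵐ[volume.restrict (horoballAtOne r)]
      (fun z => (1 / Real.pi) * Real.log (1 / ‖z‖) * rho z ^ 2) := by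
    apply (ae_restrict_iff' hBmeas).2
    apply ae_of_all
    intro z hz
    exact le_trans (by positivity) (f_lower h0 h1 hz)
  have heq : (∫ z in horoballAtOne r, (1 / Real.pi) * Real.log (1 / ‖z‖) * rho z ^ 2)
      = (∫⁻ z in horoballAtOne r,
          ENNReal.ofReal ((1 / Real.pi) * Real.log (1 / ‖z‖) * rho z ^ 2)).toReal :=
    integral_eq_lintegral_of_nonneg_ae hnn fmeas.aestronglyMeasurable.restrict
  have hub := lint_upper h0 h1
  have hlb := lint_lower h0 h1
  have hne : (∫⁻ z in horoballAtOne r,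
      ENNReal.ofReal ((1 / Real.pi) * Real.log (1 / ‖z‖) * rho z ^ 2)) ≠ ⊤ :=
    ne_top_of_le_ne_top ENNReal.ofReal_ne_top hub
  constructor
  · rw [heq]
    calc r/2 = (ENNReal.ofReal (r/2)).toReal := (ENNReal.toReal_ofReal (by positivity)).symm
      _ ≤ _ := ENNReal.toReal_mono hne hlb
  · rw [heq]
    calc _ ≤ (ENNReal.ofReal (128*r)).toReal := ENNReal.toReal_mono ENNReal.ofReal_ne_top hub
      _ = 128*r := ENNReal.toReal_ofReal (by positivity)

/-- if `B ⊆ 𝔻` is a horoball resting on `1` at hyperbolic distance `R/2`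
from the origin, then `∫_B (1/π) log(1/|z|) ρ(z)² dA(z) ≍ e^{-R/2}` for all
sufficiently large `R`, with absolute constants. -/
theorem horoball_green_integral_asymp :
    ∃ c C R₀ : ℝ, 0 < c ∧ c ≤ C ∧ ∀ R : ℝ, R₀ ≤ R → ∀ r : ℝ, 0 < r → r < 1 / 2 →
      sInf (hypDist0 '' horoballAtOne r) = R / 2 →
      c * Real.exp (-R / 2)
          ≤ ∫ z in horoballAtOne r,
              (1 / Real.pi) * Real.log (1 / ‖z‖) * rho z ^ 2 ∧
        (∫ z in horoballAtOne r,
            (1 / Real.pi) * Real.log (1 / ‖z‖) * rho z ^ 2)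
          ≤ C * Real.exp (-R / 2) := by
  refine ⟨1/4, 128, 10, by norm_num, by norm_num, ?_⟩
  intro R hR r hr0 hr12 hsInf
  rw [sInf_horoball hr0 hr12] at hsInf
  have h1r : 0 < 1 - r := by linarith
  have hfrac : (1-r)/r = Real.exp (R/2) := by
    rw [← hsInf, Real.exp_log (div_pos h1r hr0)]
  have hexp : Real.exp (-R/2) = r/(1-r) := by
    have h2 : Real.exp (-R/2) = ((1-r)/r)⁻¹ := by
      rw [show -R/2 = -(R/2) by ring, Real.exp_neg, hfrac]
    rw [h2, inv_div]
  have hexp_le : Real.exp (-R/2) ≤ 2*r := by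
    rw [hexp, div_le_iff₀ h1r]; nlinarith
  have hr_le : r ≤ Real.exp (-R/2) := by
    rw [hexp, le_div_iff₀ h1r]; nlinarith
  have hsmall : r ≤ 1/100 := by
    have h5 : Real.exp (-R/2) ≤ Real.exp (-5) := Real.exp_le_exp.2 (by linarith)
    have h100 : (100:ℝ) ≤ Real.exp 5 := by
      have h1 : (2.7182818283 : ℝ) < Real.exp 1 := Real.exp_one_gt_d9
      have h2 : Real.exp 1 ^ (5:ℕ) = Real.exp 5 := by
        rw [← Real.exp_nat_mul]; norm_num
      calc (100:ℝ) ≤ (2.7182818283:ℝ)^(5:ℕ) := by norm_num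
        _ ≤ Real.exp 1^(5:ℕ) := pow_le_pow_left₀ (by norm_num) h1.le 5
        _ = Real.exp 5 := h2
    have he5 : Real.exp (-5:ℝ) ≤ 1/100 := by
      rw [Real.exp_neg]
      calc (Real.exp 5)⁻¹ ≤ (100:ℝ)⁻¹ := by
            apply inv_anti₀ (by norm_num) h100
        _ = 1/100 := by norm_num
    linarith
  obtain ⟨hlower, hupper⟩ := integral_bounds hr0 hsmall
  constructor
  · calc (1/4 : ℝ) * Real.exp (-R/2) ≤ (1/4) * (2*r) := by
          apply mul_le_mul_of_nonneg_left hexp_le (by norm_num)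
      _ = r/2 := by ring
      _ ≤ _ := hlower
  · calc (∫ z in horoballAtOne r,
          (1 / Real.pi) * Real.log (1 / ‖z‖) * rho z ^ 2)
        ≤ 128*r := hupper
      _ ≤ 128 * Real.exp (-R/2) := by nlinarith [hr_le]
end
end

section
/- Suppose β : (0,1) → ℝ satisfies the differential inequality of Becker–Pommerenke type: u(t) = ∫_{A(t)} |f′(z)^p| y⁻¹ dx dy with u″(t) ≤ (M/t²) u(t) + C for t ∈ (0, t₀), where 0 ≤ M < 1/4. Then u(t) = O(t^{-s}) as t → 0⁺ where s = (1 - √(1-4M))/2 ≤ 2M/(1+√(1-4M)) ≤ M·(1+O(M)); in particular limsup_{t→0⁺} log u(t)/log(1/t) ≤ (1-√(1-4M))/2. -/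
open Filter Set

noncomputable section

/-- Comparison/maximum-principle lemma: if `g'' ≥ 0` wherever `g ≥ 0`, and at `t₁` we have
`g t₁ ≥ 0` and `g' t₁ < 0`, then `g > 0` on `(0, t₁)`. -/
private lemma comparison_aux (g g' g'' : ℝ → ℝ) (t₁ T : ℝ) (ht₁ : 0 < t₁) (hT : t₁ < T)
    (hd1 : ∀ t ∈ Ioo (0:ℝ) T, HasDerivAt g (g' t) t)
    (hd2 : ∀ t ∈ Ioo (0:ℝ) T, HasDerivAt g' (g'' t) t)
    (hconv : ∀ t ∈ Ioo (0:ℝ) T, 0 ≤ g t → 0 ≤ g'' t)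
    (hg1 : 0 ≤ g t₁) (hg1' : g' t₁ < 0) :
    ∀ t ∈ Ioo 0 t₁, 0 < g t := by
  intro x hx
  by_contra hgx
  push_neg at hgx
  have hx0 : 0 < x := hx.1
  have hxt₁ : x < t₁ := hx.2
  have hmem : ∀ y, x ≤ y → y ≤ t₁ → y ∈ Ioo (0:ℝ) T :=
    fun y h1 h2 => ⟨lt_of_lt_of_le hx0 h1, lt_of_le_of_lt h2 hT⟩
  obtain ⟨t₂, hxt₂, ht₂t₁, hgt₂, hg't₂⟩ :
      ∃ t₂, x < t₂ ∧ t₂ ≤ t₁ ∧ 0 < g t₂ ∧ g' t₂ < 0 := by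
    rcases hg1.lt_or_eq with h | h
    · exact ⟨t₁, hxt₁, le_refl _, h, hg1'⟩
    · -- g t₁ = 0
      have hcont : ContinuousAt g' t₁ := (hd2 t₁ (hmem t₁ hxt₁.le le_rfl)).continuousAt
      have hev : ∀ᶠ y in nhds t₁, g' y < 0 :=
        hcont.eventually_lt continuousAt_const hg1'
      rw [Metric.eventually_nhds_iff] at hev
      obtain ⟨δ, hδ, hball⟩ := hev
      set t₂ := max ((x + t₁)/2) (t₁ - δ/2) with ht₂def
      have h1 : x < t₂ := lt_of_lt_of_le (by linarith) (le_max_left _ _)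
      have h2 : t₂ < t₁ := max_lt (by linarith) (by linarith)
      have hnear : ∀ y, t₂ ≤ y → y ≤ t₁ → g' y < 0 := by
        intro y hy1 hy2
        apply hball
        have h3 : t₁ - δ/2 ≤ y := le_trans (le_max_right _ _) hy1
        rw [Real.dist_eq, abs_lt]
        constructor <;> linarith
      refine ⟨t₂, h1, h2.le, ?_, hnear t₂ le_rfl h2.le⟩
      obtain ⟨ξ, hξ, hslope⟩ := exists_hasDerivAt_eq_slope g g' h2
        (fun y hy => (hd1 y (hmem y (le_trans h1.le hy.1) hy.2)).continuousAt.continuousWithinAt)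
        (fun y hy => hd1 y (hmem y (le_trans h1.le hy.1.le) hy.2.le))
      have hξneg : g' ξ < 0 := hnear ξ hξ.1.le hξ.2.le
      rw [eq_div_iff (ne_of_gt (sub_pos.mpr h2))] at hslope
      nlinarith [mul_neg_of_neg_of_pos hξneg (sub_pos.mpr h2)]
  -- main argument
  set S := Icc x t₂ ∩ g ⁻¹' (Iic 0) with hSdef
  have hScl : IsClosed S := by
    apply ContinuousOn.preimage_isClosed_of_isClosed ?_ isClosed_Icc isClosed_Iic
    exact fun y hy =>
      (hd1 y (hmem y hy.1 (le_trans hy.2 ht₂t₁))).continuousAt.continuousWithinAt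
  have hScom : IsCompact S := isCompact_Icc.of_isClosed_subset hScl inter_subset_left
  have hSne : S.Nonempty := ⟨x, ⟨le_refl x, hxt₂.le⟩, hgx⟩
  set c := sSup S with hcdef
  have hcS : c ∈ S := hScom.sSup_mem hSne
  have hgc : g c ≤ 0 := hcS.2
  have hcx : x ≤ c := hcS.1.1
  have hct₂ : c < t₂ := lt_of_le_of_ne hcS.1.2 (fun hceq => by rw [hceq] at hgc; linarith)
  have hc0 : 0 < c := lt_of_lt_of_le hx0 hcx
  have hposy : ∀ y, c < y → y ≤ t₂ → 0 < g y := by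
    intro y hy1 hy2
    rcases hy2.lt_or_eq with h | h
    · by_contra hcon
      push_neg at hcon
      have hyS : y ∈ S := ⟨⟨le_trans hcx hy1.le, hy2⟩, hcon⟩
      have := le_csSup hScom.bddAbove hyS
      rw [← hcdef] at this
      linarith
    · rw [h]; exact hgt₂
  have hg'neg : ∀ y ∈ Ioo c t₂, g' y < 0 := by
    intro y hy
    have hymem : ∀ z, y ≤ z → z ≤ t₂ → z ∈ Ioo (0:ℝ) T :=
      fun z h1 h2 => hmem z (le_trans hcx (le_trans hy.1.le h1)) (le_trans h2 ht₂t₁)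
    have hmono : MonotoneOn g' (Icc y t₂) := by
      apply monotoneOn_of_deriv_nonneg (convex_Icc y t₂)
      · exact fun z hz => (hd2 z (hymem z hz.1 hz.2)).continuousAt.continuousWithinAt
      · intro z hz
        rw [interior_Icc] at hz
        exact ((hd2 z (hymem z hz.1.le hz.2.le)).differentiableAt).differentiableWithinAt
      · intro z hz
        rw [interior_Icc] at hz
        rw [(hd2 z (hymem z hz.1.le hz.2.le)).deriv]
        exact hconv z (hymem z hz.1.le hz.2.le)
          (le_of_lt (hposy z (lt_trans hy.1 hz.1) hz.2.le))
    have := hmono ⟨le_refl y, hy.2.le⟩ ⟨hy.2.le, le_refl t₂⟩ hy.2.le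
    exact lt_of_le_of_lt this hg't₂
  have hanti : StrictAntiOn g (Icc c t₂) := by
    apply strictAntiOn_of_deriv_neg (convex_Icc c t₂)
    · exact fun z hz =>
        (hd1 z (hmem z (le_trans hcx hz.1) (le_trans hz.2 ht₂t₁))).continuousAt.continuousWithinAt
    · intro z hz
      rw [interior_Icc] at hz
      rw [(hd1 z (hmem z (le_trans hcx hz.1.le) (le_trans hz.2.le ht₂t₁))).deriv]
      exact hg'neg z hz
  have := hanti ⟨le_refl c, hct₂.le⟩ ⟨hct₂.le, le_refl t₂⟩ hct₂
  linarith

private lemma hasDerivAt_W (s t₁ K B t : ℝ) (ht : t ≠ 0) :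
    HasDerivAt (fun x : ℝ => K * (x ^ (-s) * (2*t₁ - x)) + B * x^2)
      (K * ((-s) * t ^ (-s-1) * (2*t₁ - t) - t ^ (-s)) + B*(2*t)) t := by
  have h1 : HasDerivAt (fun x : ℝ => x ^ (-s)) ((-s) * t ^ (-s-1)) t := by
    simpa using Real.hasDerivAt_rpow_const (p := -s) (Or.inl ht)
  have h2 : HasDerivAt (fun x : ℝ => 2*t₁ - x) (-1) t := (hasDerivAt_id t).const_sub (2*t₁)
  have h3 := h1.mul h2
  have h4 : HasDerivAt (fun x : ℝ => x^2) (2*t) t := by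
    simpa using hasDerivAt_pow 2 t
  have h5 := (h3.const_mul K).add (h4.const_mul B)
  exact h5.congr_deriv (by ring)

private lemma hasDerivAt_W' (s t₁ K B t : ℝ) (ht : t ≠ 0) :
    HasDerivAt (fun x : ℝ => K * ((-s) * x ^ (-s-1) * (2*t₁ - x) - x ^ (-s)) + B*(2*x))
      (K * (s*(s+1) * t ^ (-s-2) * (2*t₁ - t) + 2*s * t ^ (-s-1)) + B*2) t := by
  have h1 : HasDerivAt (fun x : ℝ => x ^ (-s-1)) ((-s-1) * t ^ (-s-2)) t := by
    have := Real.hasDerivAt_rpow_const (x := t) (p := -s-1) (Or.inl ht)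
    rw [show (-s-1-1 : ℝ) = -s-2 by ring] at this
    exact this
  have h0 : HasDerivAt (fun x : ℝ => x ^ (-s)) ((-s) * t ^ (-s-1)) t := by
    simpa using Real.hasDerivAt_rpow_const (p := -s) (Or.inl ht)
  have h2 : HasDerivAt (fun x : ℝ => 2*t₁ - x) (-1) t := (hasDerivAt_id t).const_sub (2*t₁)
  have h3 := ((h1.const_mul (-s)).mul h2).sub h0
  have h4 : HasDerivAt (fun x : ℝ => B*(2*x)) (B*2) t := by
    simpa using ((hasDerivAt_id t).const_mul 2).const_mul B
  have h5 := (h3.const_mul K).add h4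
  exact h5.congr_deriv (by ring)

private lemma limsup_le_of_eventually_le_add (f : ℝ → ℝ) (l : Filter ℝ) (s : ℝ) (hs : 0 ≤ s)
    (h : ∀ ε : ℝ, 0 < ε → ∀ᶠ t in l, f t ≤ s + ε) : limsup f l ≤ s := by
  rw [Filter.limsup_eq]
  by_cases hbdd : BddBelow {a | ∀ᶠ n in l, f n ≤ a}
  · by_contra hcon
    push_neg at hcon
    have hε : 0 < (sInf {a | ∀ᶠ n in l, f n ≤ a} - s)/2 := by linarith
    have hmem : (s + (sInf {a | ∀ᶠ n in l, f n ≤ a} - s)/2) ∈ {a | ∀ᶠ n in l, f n ≤ a} :=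
      h _ hε
    have := csInf_le hbdd hmem
    linarith
  · rw [Real.sInf_of_not_bddBelow hbdd]
    exact hs

set_option maxHeartbeats 2000000 in
/-- Euler-type differential inequality: if `u ≥ 0` is `C²` on `(0,t₀)`
with `u″(t) ≤ (M/t²) u(t) + C` for some `0 ≤ M < 1/4` and `C ≥ 0`, then, with
`s = (1 - √(1-4M))/2`, one has `u(t) = O(t^{-s})` as `t → 0⁺`; in particular
`limsup_{t→0⁺} log u(t)/log(1/t) ≤ (1 - √(1-4M))/2`. -/
theorem euler_differential_inequality (u u' u'' : ℝ → ℝ) (t₀ M C : ℝ)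
    (ht₀ : 0 < t₀) (hM0 : 0 ≤ M) (hM : M < 1 / 4) (hC : 0 ≤ C)
    (hnonneg : ∀ t ∈ Ioo 0 t₀, 0 ≤ u t)
    (hderiv : ∀ t ∈ Ioo 0 t₀, HasDerivAt u (u' t) t)
    (hderiv2 : ∀ t ∈ Ioo 0 t₀, HasDerivAt u' (u'' t) t)
    (hineq : ∀ t ∈ Ioo 0 t₀, u'' t ≤ (M / t ^ 2) * u t + C) :
    (∃ K t₁ : ℝ, 0 < K ∧ 0 < t₁ ∧ t₁ ≤ t₀ ∧ ∀ t ∈ Ioo 0 t₁,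
        u t ≤ K * t ^ (-(1 - Real.sqrt (1 - 4 * M)) / 2)) ∧
      limsup (fun t : ℝ => Real.log (u t) / Real.log (1 / t)) (nhdsWithin 0 (Ioi 0))
        ≤ (1 - Real.sqrt (1 - 4 * M)) / 2 := by
  have h4M : (0:ℝ) ≤ 1 - 4*M := by linarith
  set σ := Real.sqrt (1 - 4 * M) with hσdef
  have hσ0 : 0 ≤ σ := Real.sqrt_nonneg _
  have hσ1 : σ ≤ 1 := by rw [hσdef]; exact Real.sqrt_le_one.mpr (by linarith)
  have hσsq : σ^2 = 1 - 4*M := Real.sq_sqrt h4M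
  set s := (1 - σ)/2 with hsdef
  have hs0 : 0 ≤ s := by rw [hsdef]; linarith
  have hsM : s * (1 - s) = M := by rw [hsdef]; nlinarith [hσsq]
  clear_value σ s
  obtain ⟨t₁, ht₁def⟩ : ∃ x : ℝ, x = min t₀ 1 / 2 := ⟨_, rfl⟩
  have ht₁0 : 0 < t₁ := by
    rw [ht₁def]; have := lt_min ht₀ one_pos; positivity
  have ht₁t₀ : t₁ < t₀ := by
    rw [ht₁def]
    have h1 : min t₀ 1 ≤ t₀ := min_le_left _ _
    linarith
  have ht₁half : t₁ ≤ 1/2 := by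
    rw [ht₁def]
    have h1 : min t₀ 1 ≤ 1 := min_le_right _ _
    linarith
  obtain ⟨T, hTdef⟩ : ∃ x : ℝ, x = min (2*t₁) t₀ := ⟨_, rfl⟩
  have hTt₁ : t₁ < T := by rw [hTdef]; exact lt_min (by linarith) ht₁t₀
  have hT2t₁ : T ≤ 2*t₁ := by rw [hTdef]; exact min_le_left _ _
  have hsubT : Ioo (0:ℝ) T ⊆ Ioo 0 t₀ := by
    intro y hy
    refine ⟨hy.1, lt_of_lt_of_le hy.2 ?_⟩
    rw [hTdef]; exact min_le_right _ _
  obtain ⟨B, hBdef⟩ : ∃ x : ℝ, x = C / (2 - M) := ⟨_, rfl⟩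
  have h2M : (0:ℝ) < 2 - M := by linarith
  have hB0 : 0 ≤ B := by rw [hBdef]; exact div_nonneg hC h2M.le
  have hBeq : 2*B = M*B + C := by
    rw [hBdef]; field_simp; ring
  have ht₁pow : 0 < t₁ ^ (-s) := Real.rpow_pos_of_pos ht₁0 _
  obtain ⟨K, hKdef⟩ : ∃ x : ℝ, x = max 1
      (max (u t₁ / (t₁^(-s) * t₁)) ((B*(2*t₁) - u' t₁ + 1)/((s+1) * t₁^(-s)))) := ⟨_, rfl⟩
  have hK1 : 1 ≤ K := by rw [hKdef]; exact le_max_left _ _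
  have hK0 : 0 < K := lt_of_lt_of_le one_pos hK1
  obtain ⟨W, hWdef⟩ : ∃ F : ℝ → ℝ, F = fun t => K * (t ^ (-s) * (2*t₁ - t)) + B * t^2 :=
    ⟨_, rfl⟩
  obtain ⟨W', hW'def⟩ : ∃ F : ℝ → ℝ,
      F = fun t => K * ((-s) * t ^ (-s-1) * (2*t₁ - t) - t ^ (-s)) + B*(2*t) := ⟨_, rfl⟩
  obtain ⟨W'', hW''def⟩ : ∃ F : ℝ → ℝ,
      F = fun t => K * (s*(s+1) * t ^ (-s-2) * (2*t₁ - t) + 2*s * t ^ (-s-1)) + B*2 :=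
    ⟨_, rfl⟩
  have hdW : ∀ t ∈ Ioo (0:ℝ) T, HasDerivAt W (W' t) t := by
    intro t ht
    rw [hWdef, hW'def]
    exact hasDerivAt_W s t₁ K B t (ne_of_gt ht.1)
  have hdW' : ∀ t ∈ Ioo (0:ℝ) T, HasDerivAt W' (W'' t) t := by
    intro t ht
    rw [hW'def, hW''def]
    exact hasDerivAt_W' s t₁ K B t (ne_of_gt ht.1)
  -- supersolution property
  have hsup : ∀ t ∈ Ioo (0:ℝ) T, M / t^2 * W t + C ≤ W'' t := by
    intro t ht
    have ht0 : 0 < t := ht.1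
    have ht2 : (0:ℝ) < t^2 := by positivity
    have hts : 0 < t ^ (-s) := Real.rpow_pos_of_pos ht0 _
    have hts1 : 0 < t ^ (-s-1) := Real.rpow_pos_of_pos ht0 _
    have hts2 : 0 < t ^ (-s-2) := Real.rpow_pos_of_pos ht0 _
    have h2t : 0 ≤ 2*t₁ - t := by
      have := lt_of_lt_of_le ht.2 hT2t₁
      linarith
    have e2 : t ^ (-s-2) * t^2 = t ^ (-s) := by
      have h := Real.rpow_add ht0 (-s-2) 2
      rw [show (-s-2+2 : ℝ) = -s by ring] at h
      rw [h, show t^((2:ℝ)) = t^(2:ℕ) from by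
        rw [← Real.rpow_natCast t 2]; norm_num]
    simp only [hWdef, hW''def]
    have eM : M / t^2 * (K * (t^(-s) * (2*t₁ - t)) + B * t^2)
        = K * (M * (t^(-s-2) * (2*t₁ - t))) + M*B := by
      rw [div_mul_eq_mul_div, div_eq_iff (ne_of_gt ht2), ← e2]
      ring
    rw [eM]
    have hBeq' : 2*B = s*(1-s)*B + C := by rw [hsM]; exact hBeq
    have hM' : M = s*(1-s) := hsM.symm
    rw [hM']
    nlinarith [mul_nonneg (mul_nonneg (mul_nonneg hK0.le (sq_nonneg s)) hts2.le) h2t,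
      mul_nonneg (mul_nonneg hK0.le hs0) hts1.le, hBeq']
  -- boundary conditions at t₁
  have e1 : t₁ ^ (-s-1) * t₁ = t₁ ^ (-s) := by
    have h := Real.rpow_add ht₁0 (-s-1) 1
    rw [show (-s-1+1 : ℝ) = -s by ring, Real.rpow_one] at h
    rw [h]
  have hWt₁ : 0 ≤ W t₁ - u t₁ := by
    have hKu : u t₁ / (t₁^(-s) * t₁) ≤ K := by
      rw [hKdef]; exact le_trans (le_max_left _ _) (le_max_right _ _)
    have hpos : 0 < t₁^(-s) * t₁ := by positivity
    have h1 : u t₁ ≤ K * (t₁^(-s) * t₁) := (div_le_iff₀ hpos).mp hKu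
    simp only [hWdef]
    nlinarith [mul_nonneg hB0 (sq_nonneg t₁)]
  have hW't₁ : W' t₁ - u' t₁ < 0 := by
    have hKu : (B*(2*t₁) - u' t₁ + 1)/((s+1) * t₁^(-s)) ≤ K := by
      rw [hKdef]; exact le_trans (le_max_right _ _) (le_max_right _ _)
    have hpos : 0 < (s+1) * t₁^(-s) := mul_pos (by linarith) ht₁pow
    have h1 : B*(2*t₁) - u' t₁ + 1 ≤ K * ((s+1) * t₁^(-s)) := (div_le_iff₀ hpos).mp hKu
    simp only [hW'def]
    rw [show (2*t₁ - t₁ : ℝ) = t₁ by ring]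
    rw [show (-s) * t₁^(-s-1) * t₁ - t₁^(-s) = -((s+1) * t₁^(-s)) from by
      rw [mul_assoc, e1]; ring]
    linarith
  -- comparison
  have hcomp : ∀ t ∈ Ioo 0 t₁, 0 < W t - u t := by
    apply comparison_aux (fun t => W t - u t) (fun t => W' t - u' t) (fun t => W'' t - u'' t)
      t₁ T ht₁0 hTt₁
    · exact fun t ht => (hdW t ht).sub (hderiv t (hsubT ht))
    · exact fun t ht => (hdW' t ht).sub (hderiv2 t (hsubT ht))
    · intro t ht hge
      have hge' : 0 ≤ W t - u t := hge
      have h1 := hsup t ht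
      have h2 := hineq t (hsubT ht)
      have hq : 0 ≤ M / t^2 * (W t - u t) :=
        mul_nonneg (div_nonneg hM0 (sq_nonneg t)) hge'
      have h3 : M / t^2 * (W t - u t) = M/t^2 * W t - M/t^2 * u t := by ring
      show 0 ≤ W'' t - u'' t
      linarith
    · exact hWt₁
    · exact hW't₁
  obtain ⟨K', hK'def⟩ : ∃ x : ℝ, x = 2*K*t₁ + B*t₁^2 + 1 := ⟨_, rfl⟩
  have hK'1 : 1 ≤ K' := by
    rw [hK'def]
    linarith [mul_pos hK0 ht₁0, mul_nonneg hB0 (sq_nonneg t₁)]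
  have hK'0 : 0 < K' := lt_of_lt_of_le one_pos hK'1
  -- the O(t^{-s}) bound
  have hbound : ∀ t ∈ Ioo 0 t₁, u t ≤ K' * t^(-s) := by
    intro t ht
    have ht0 : 0 < t := ht.1
    have htt₁ : t < t₁ := ht.2
    have ht1 : t < 1 := by linarith
    have h1 : 0 < W t - u t := hcomp t ht
    have hp : 1 ≤ t ^ (-s) :=
      Real.one_le_rpow_of_pos_of_le_one_of_nonpos ht0 ht1.le (by linarith)
    simp only [hWdef] at h1
    rw [hK'def]
    have hppos : (0:ℝ) ≤ t^(-s) := by linarith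
    have htsq : t^2 ≤ t₁^2 := pow_le_pow_left₀ ht0.le htt₁.le 2
    have f1 : 0 ≤ K * t^(-s) * t := mul_nonneg (mul_nonneg hK0.le hppos) ht0.le
    have f2 : B * t^2 ≤ B * t₁^2 := mul_le_mul_of_nonneg_left htsq hB0
    have f3 : B * t₁^2 ≤ B * t₁^2 * t^(-s) :=
      le_mul_of_one_le_right (mul_nonneg hB0 (sq_nonneg t₁)) hp
    linarith [h1, f1, f2, f3]
  constructor
  · refine ⟨K', t₁, hK'0, ht₁0, ht₁t₀.le, ?_⟩
    intro t ht
    rw [show -(1 - σ)/2 = -s from by rw [hsdef]; ring]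
    exact hbound t ht
  · -- limsup bound
    apply limsup_le_of_eventually_le_add _ _ _ hs0
    intro ε hε
    have hδ : 0 < min t₁ (Real.exp (-(Real.log K')/ε)) :=
      lt_min ht₁0 (Real.exp_pos _)
    filter_upwards [Ioo_mem_nhdsGT_of_mem
      (show (0:ℝ) ∈ Ico 0 (min t₁ (Real.exp (-(Real.log K')/ε))) from ⟨le_rfl, hδ⟩)]
      with t ht
    obtain ⟨ht0, htlt⟩ := ht
    have htt₁ : t < t₁ := lt_of_lt_of_le htlt (min_le_left _ _)
    have ht1 : t < 1 := by linarith
    have hlogt : Real.log t < 0 := Real.log_neg ht0 ht1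
    have hL : 0 < Real.log (1/t) := by
      rw [one_div, Real.log_inv]; linarith
    have hub := hbound t ⟨ht0, htt₁⟩
    have htpow : 0 < t^(-s) := Real.rpow_pos_of_pos ht0 _
    have hp : 1 ≤ t ^ (-s) :=
      Real.one_le_rpow_of_pos_of_le_one_of_nonpos ht0 ht1.le (by linarith)
    have hlogu : Real.log (u t) ≤ Real.log K' + s * Real.log (1/t) := by
      have hmul : Real.log (K' * t^(-s)) = Real.log K' + s * Real.log (1/t) := by
        rw [Real.log_mul (ne_of_gt hK'0) (ne_of_gt htpow), Real.log_rpow ht0,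
          one_div, Real.log_inv]
        ring
      have h1 : Real.log (u t) ≤ Real.log (K' * t^(-s)) := by
        rcases (hnonneg t ⟨ht0, lt_trans htt₁ ht₁t₀⟩).lt_or_eq with h | h
        · exact Real.log_le_log h hub
        · rw [← h, Real.log_zero]
          apply Real.log_nonneg
          have := mul_le_mul_of_nonneg_left hp (le_trans zero_le_one hK'1)
          linarith
      linarith [hmul ▸ h1]
    have h2 : Real.log t < -(Real.log K')/ε := by
      have h3 := Real.log_lt_log ht0 (lt_of_lt_of_le htlt (min_le_right _ _))
      rwa [Real.log_exp] at h3
    have h3 : Real.log K' < ε * Real.log (1/t) := by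
      rw [one_div, Real.log_inv]
      have h4 : ε * Real.log t < ε * (-(Real.log K')/ε) :=
        (mul_lt_mul_iff_right₀ hε).mpr h2
      rw [mul_div_cancel₀ _ (ne_of_gt hε)] at h4
      linarith
    show Real.log (u t) / Real.log (1/t) ≤ s + ε
    rw [div_le_iff₀ hL]
    have hexp : (s + ε) * Real.log (1/t) = s * Real.log (1/t) + ε * Real.log (1/t) := by ring
    linarith

end
end
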